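/- Let I(μ) = ∫_{1}^{μ^{−5/3}} ∫_{1}^{μ^{−5/2} N^{−3/2}} k^{−2} exp(2π√(2k/3)) dk dN for 0 < μ < 1. Then lim_{μ→0⁺} μ^{5/4} · log I(μ) = 2π√(2/3). -/

import Mathlib

open MeasureTheory Filter Real

/-- The continuum approximation to the naive count of AdS₇ vacua, with each `(N, k)`
weighted by the Hardy–Ramanujan asymptotic of `p(k)²` (up to the `1/48` constant). -/
noncomputable def naiveAds7Count (μ : ℝ) : ℝ :=
  ∫ N in (1 : ℝ)..(μ ^ (-(5 : ℝ) / 3)),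
    ∫ k in (1 : ℝ)..(μ ^ (-(5 : ℝ) / 2) * N ^ (-(3 : ℝ) / 2)),
      k ^ (-(2 : ℝ)) * Real.exp (2 * π * Real.sqrt (2 * k / 3))

open Topology

/-! ### Auxiliary definitions and lemmas -/

noncomputable def ads7C : ℝ := 2 * Real.pi * Real.sqrt (2 / 3)

lemma ads7C_pos : 0 < ads7C := by
  have : (0:ℝ) < Real.sqrt (2/3) := Real.sqrt_pos.mpr (by norm_num)
  unfold ads7C; positivity

noncomputable def ads7g (k : ℝ) : ℝ :=
  k ^ (-(2 : ℝ)) * Real.exp (2 * Real.pi * Real.sqrt (2 * k / 3))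

lemma ads7g_eq (k : ℝ) : ads7g k = k ^ (-(2:ℝ)) * Real.exp (ads7C * Real.sqrt k) := by
  have h : Real.sqrt (2 * k / 3) = Real.sqrt (2/3) * Real.sqrt k := by
    rw [show 2 * k / 3 = (2/3) * k by ring, Real.sqrt_mul (by norm_num)]
  unfold ads7g ads7C
  rw [h]; ring_nf

lemma ads7g_nonneg {k : ℝ} (hk : 0 ≤ k) : 0 ≤ ads7g k := by
  unfold ads7g; positivity

lemma ads7g_contOn : ContinuousOn ads7g (Set.Ici (1:ℝ)) := by
  apply ContinuousOn.mul
  · exact continuousOn_id.rpow_const fun x hx => Or.inl (by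
      have : (1:ℝ) ≤ x := hx
      simp only [id]; linarith)
  · exact (Real.continuous_exp.comp (by continuity)).continuousOn

lemma ads7g_intInt {a b : ℝ} (ha : 1 ≤ a) (hb : 1 ≤ b) :
    IntervalIntegrable ads7g MeasureTheory.volume a b := by
  apply ContinuousOn.intervalIntegrable
  apply ads7g_contOn.mono
  intro x hx
  rcases Set.mem_uIcc.mp hx with h | h
  · exact le_trans ha h.1
  · exact le_trans hb h.1

lemma ads7_sqrt_rpow_half {x : ℝ} (p : ℝ) (hx : 0 ≤ x) :
    Real.sqrt (x ^ p) = x ^ (p/2) := by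
  rw [Real.sqrt_eq_rpow, ← Real.rpow_mul hx]; ring_nf

lemma ads7_sixteen_pow : ((1:ℝ)/16) ^ (-(5:ℝ)/2) = 1024 := by
  rw [show (1:ℝ)/16 = 16⁻¹ by norm_num, Real.inv_rpow (by norm_num),
    show (-(5:ℝ)/2) = -((5:ℝ)/2) by norm_num, Real.rpow_neg (by norm_num), inv_inv,
    show (5:ℝ)/2 = (1/2)*5 by norm_num, Real.rpow_mul (by norm_num),
    ← Real.sqrt_eq_rpow, show (16:ℝ) = 4^2 by norm_num, Real.sqrt_sq (by norm_num),
    show (5:ℝ) = ((5:ℕ):ℝ) by norm_num, Real.rpow_natCast]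
  norm_num

lemma naiveAds7Count_eq (μ : ℝ) : naiveAds7Count μ =
    ∫ N in (1 : ℝ)..(μ ^ (-(5 : ℝ) / 3)),
      ∫ k in (1 : ℝ)..(μ ^ (-(5 : ℝ) / 2) * N ^ (-(3 : ℝ) / 2)), ads7g k := rfl

/-- Upper bound on the naive count. -/
lemma naiveAds7Count_upper {μ : ℝ} (hμ0 : 0 < μ) (hμ1 : μ < 1) :
    naiveAds7Count μ ≤
      Real.exp (ads7C * μ ^ (-(5:ℝ)/4)) * μ ^ (-(5:ℝ)/2) * μ ^ (-(5:ℝ)/3) := by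
  set U : ℝ := μ ^ (-(5:ℝ)/3) with hUdef
  set M : ℝ := μ ^ (-(5:ℝ)/2) with hMdef
  have hM1 : 1 ≤ M := Real.one_le_rpow_of_pos_of_le_one_of_nonpos hμ0 hμ1.le (by norm_num)
  have hU1 : 1 ≤ U := Real.one_le_rpow_of_pos_of_le_one_of_nonpos hμ0 hμ1.le (by norm_num)
  have hsqrtM : Real.sqrt M = μ ^ (-(5:ℝ)/4) := by
    rw [hMdef, ads7_sqrt_rpow_half _ hμ0.le]; norm_num
  have hbound : ∀ N ∈ Set.uIoc (1:ℝ) U,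
      ‖∫ k in (1:ℝ)..(M * N ^ (-(3:ℝ)/2)), ads7g k‖ ≤
        Real.exp (ads7C * μ ^ (-(5:ℝ)/4)) * M := by
    intro N hN
    rw [Set.uIoc_of_le hU1] at hN
    obtain ⟨hN1, hNU⟩ := hN
    set T : ℝ := M * N ^ (-(3:ℝ)/2) with hTdef
    have hN0 : 0 < N := lt_trans one_pos hN1
    have hT1 : 1 ≤ T := by
      have h1 : U ^ (-(3:ℝ)/2) ≤ N ^ (-(3:ℝ)/2) :=
        Real.rpow_le_rpow_of_nonpos hN0 hNU (by norm_num)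
      have h2 : U ^ (-(3:ℝ)/2) = μ ^ ((5:ℝ)/2) := by
        rw [hUdef, ← Real.rpow_mul hμ0.le]; norm_num
      have h3 : M * μ ^ ((5:ℝ)/2) = 1 := by
        rw [hMdef, ← Real.rpow_add hμ0]; norm_num
      calc (1:ℝ) = M * μ ^ ((5:ℝ)/2) := h3.symm
        _ = M * U ^ (-(3:ℝ)/2) := by rw [h2]
        _ ≤ M * N ^ (-(3:ℝ)/2) := by
            apply mul_le_mul_of_nonneg_left h1 (by positivity)
    have hTM : T ≤ M := by
      have : N ^ (-(3:ℝ)/2) ≤ 1 :=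
        Real.rpow_le_one_of_one_le_of_nonpos hN1.le (by norm_num)
      calc T = M * N ^ (-(3:ℝ)/2) := rfl
        _ ≤ M * 1 := mul_le_mul_of_nonneg_left this (by positivity)
        _ = M := mul_one M
    have hsT : Real.sqrt T ≤ μ ^ (-(5:ℝ)/4) := by
      rw [← hsqrtM]; exact Real.sqrt_le_sqrt hTM
    have key : ∀ k ∈ Set.uIoc (1:ℝ) T,
        ‖ads7g k‖ ≤ Real.exp (ads7C * μ ^ (-(5:ℝ)/4)) := by
      intro k hk
      rw [Set.uIoc_of_le hT1] at hk
      obtain ⟨hk1, hkT⟩ := hk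
      have hk0 : (0:ℝ) < k := lt_trans one_pos hk1
      have hgnn : 0 ≤ ads7g k := ads7g_nonneg hk0.le
      rw [Real.norm_eq_abs, abs_of_nonneg hgnn, ads7g_eq]
      have h1 : k ^ (-(2:ℝ)) ≤ 1 :=
        Real.rpow_le_one_of_one_le_of_nonpos hk1.le (by norm_num)
      have h2 : Real.exp (ads7C * Real.sqrt k) ≤
          Real.exp (ads7C * μ ^ (-(5:ℝ)/4)) := by
        apply Real.exp_le_exp.mpr
        apply mul_le_mul_of_nonneg_left _ ads7C_pos.le
        exact le_trans (Real.sqrt_le_sqrt hkT) hsT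
      calc k ^ (-(2:ℝ)) * Real.exp (ads7C * Real.sqrt k)
          ≤ 1 * Real.exp (ads7C * μ ^ (-(5:ℝ)/4)) := by
            apply mul_le_mul h1 h2 (Real.exp_pos _).le (by norm_num)
        _ = Real.exp (ads7C * μ ^ (-(5:ℝ)/4)) := one_mul _
    calc ‖∫ k in (1:ℝ)..T, ads7g k‖
        ≤ Real.exp (ads7C * μ ^ (-(5:ℝ)/4)) * |T - 1| :=
          intervalIntegral.norm_integral_le_of_norm_le_const key
      _ ≤ Real.exp (ads7C * μ ^ (-(5:ℝ)/4)) * M := by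
          apply mul_le_mul_of_nonneg_left _ (Real.exp_pos _).le
          rw [abs_of_nonneg (by linarith)]
          linarith
  have houter : ‖naiveAds7Count μ‖ ≤
      (Real.exp (ads7C * μ ^ (-(5:ℝ)/4)) * M) * |U - 1| := by
    rw [naiveAds7Count_eq]
    exact intervalIntegral.norm_integral_le_of_norm_le_const hbound
  have hle : naiveAds7Count μ ≤ (Real.exp (ads7C * μ ^ (-(5:ℝ)/4)) * M) * |U - 1| :=
    le_trans (le_abs_self _) houter
  have hUabs : |U - 1| ≤ U := by rw [abs_of_nonneg (by linarith)]; linarith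
  calc naiveAds7Count μ ≤ (Real.exp (ads7C * μ ^ (-(5:ℝ)/4)) * M) * |U - 1| := hle
    _ ≤ (Real.exp (ads7C * μ ^ (-(5:ℝ)/4)) * M) * U := by
        apply mul_le_mul_of_nonneg_left hUabs
        positivity
    _ = Real.exp (ads7C * μ ^ (-(5:ℝ)/4)) * μ ^ (-(5:ℝ)/2) * μ ^ (-(5:ℝ)/3) := rfl

/-- Lower bound on the naive count. -/
lemma naiveAds7Count_lower {μ : ℝ} (hμ0 : 0 < μ) (hμ1 : μ < 1/16) :
    μ * ((μ ^ (-(5:ℝ)/2) * (1+μ) ^ (-(3:ℝ)/2)) ^ (-(2:ℝ)) *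
      Real.exp (ads7C * Real.sqrt (μ ^ (-(5:ℝ)/2) * (1+μ) ^ (-(3:ℝ)/2) - 1)))
      ≤ naiveAds7Count μ := by
  have hμ1' : μ < 1 := by linarith
  set M : ℝ := μ ^ (-(5:ℝ)/2) with hMdef
  set U : ℝ := μ ^ (-(5:ℝ)/3) with hUdef
  set B : ℝ := M * (1+μ) ^ (-(3:ℝ)/2) with hBdef
  have hM1 : 1 ≤ M := Real.one_le_rpow_of_pos_of_le_one_of_nonpos hμ0 hμ1'.le (by norm_num)
  have hU1 : 1 ≤ U := Real.one_le_rpow_of_pos_of_le_one_of_nonpos hμ0 hμ1'.le (by norm_num)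
  have hM1024 : 1024 ≤ M := by
    rw [← ads7_sixteen_pow]
    exact Real.rpow_le_rpow_of_nonpos hμ0 hμ1.le (by norm_num)
  have hq : (1:ℝ)/4 ≤ (1+μ) ^ (-(3:ℝ)/2) := by
    have h3 : (1+μ) ^ ((3:ℝ)/2) ≤ 4 := by
      calc (1+μ) ^ ((3:ℝ)/2) ≤ (2:ℝ) ^ ((3:ℝ)/2) :=
            Real.rpow_le_rpow (by linarith) (by linarith) (by norm_num)
        _ ≤ (2:ℝ) ^ (2:ℝ) :=
            Real.rpow_le_rpow_of_exponent_le one_le_two (by norm_num)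
        _ = 4 := by rw [Real.rpow_two]; norm_num
    have hp : (0:ℝ) < (1+μ) ^ ((3:ℝ)/2) := Real.rpow_pos_of_pos (by linarith) _
    rw [show (-(3:ℝ)/2) = -((3:ℝ)/2) by norm_num, Real.rpow_neg (by linarith)]
    rw [show (1:ℝ)/4 = 4⁻¹ by norm_num]
    exact inv_anti₀ hp h3
  have hB2 : 2 ≤ B := by
    calc (2:ℝ) ≤ 1024 * (1/4) := by norm_num
      _ ≤ M * (1+μ) ^ (-(3:ℝ)/2) := by
          apply mul_le_mul hM1024 hq (by norm_num) (by linarith)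
  have hB0 : (0:ℝ) < B := by linarith
  have hBM : B ≤ M := by
    have h1 : (1+μ) ^ (-(3:ℝ)/2) ≤ 1 :=
      Real.rpow_le_one_of_one_le_of_nonpos (by linarith) (by norm_num)
    calc B = M * (1+μ) ^ (-(3:ℝ)/2) := rfl
      _ ≤ M * 1 := mul_le_mul_of_nonneg_left h1 (by linarith)
      _ = M := mul_one M
  have h1μU : 1 + μ ≤ U := by
    have h1 : ((1:ℝ)/16) ^ (-(5:ℝ)/3) ≤ U :=
      Real.rpow_le_rpow_of_nonpos hμ0 hμ1.le (by norm_num)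
    have h2 : (16:ℝ) ≤ ((1:ℝ)/16) ^ (-(5:ℝ)/3) := by
      rw [show (1:ℝ)/16 = 16⁻¹ by norm_num, Real.inv_rpow (by norm_num),
        show (-(5:ℝ)/3) = -((5:ℝ)/3) by norm_num, Real.rpow_neg (by norm_num), inv_inv]
      calc (16:ℝ) = 16 ^ (1:ℝ) := (Real.rpow_one _).symm
        _ ≤ 16 ^ ((5:ℝ)/3) :=
            Real.rpow_le_rpow_of_exponent_le (by norm_num) (by norm_num)
    linarith
  have hTb : ∀ N ∈ Set.Icc (1:ℝ) U,
      1 ≤ M * N ^ (-(3:ℝ)/2) ∧ M * N ^ (-(3:ℝ)/2) ≤ M := by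
    intro N hN
    obtain ⟨hN1, hNU⟩ := hN
    have hN0 : (0:ℝ) < N := by linarith
    constructor
    · have h1 : U ^ (-(3:ℝ)/2) ≤ N ^ (-(3:ℝ)/2) :=
        Real.rpow_le_rpow_of_nonpos hN0 hNU (by norm_num)
      have h2 : U ^ (-(3:ℝ)/2) = μ ^ ((5:ℝ)/2) := by
        rw [hUdef, ← Real.rpow_mul hμ0.le]; norm_num
      have h3 : M * μ ^ ((5:ℝ)/2) = 1 := by
        rw [hMdef, ← Real.rpow_add hμ0]; norm_num
      calc (1:ℝ) = M * μ ^ ((5:ℝ)/2) := h3.symm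
        _ = M * U ^ (-(3:ℝ)/2) := by rw [h2]
        _ ≤ M * N ^ (-(3:ℝ)/2) := mul_le_mul_of_nonneg_left h1 (by linarith)
    · have h1 : N ^ (-(3:ℝ)/2) ≤ 1 :=
        Real.rpow_le_one_of_one_le_of_nonpos hN1 (by norm_num)
      calc M * N ^ (-(3:ℝ)/2) ≤ M * 1 := mul_le_mul_of_nonneg_left h1 (by linarith)
        _ = M := mul_one M
  set innerF : ℝ → ℝ := fun N => ∫ k in (1:ℝ)..(M * N ^ (-(3:ℝ)/2)), ads7g k with hinnerdef
  have hgInt : IntegrableOn ads7g (Set.uIcc 1 M) MeasureTheory.volume := by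
    rw [Set.uIcc_of_le hM1]
    exact (ads7g_contOn.mono Set.Icc_subset_Ici_self).integrableOn_Icc
  have hF : ContinuousOn (fun t => ∫ k in (1:ℝ)..t, ads7g k) (Set.uIcc 1 M) :=
    intervalIntegral.continuousOn_primitive_interval hgInt
  have hTcont : ContinuousOn (fun N : ℝ => M * N ^ (-(3:ℝ)/2)) (Set.Icc 1 U) := by
    apply continuousOn_const.mul
    exact continuousOn_id.rpow_const fun x hx => Or.inl (by
      have : (1:ℝ) ≤ x := hx.1
      simp only [id]; linarith)
  have hinnerCont : ContinuousOn innerF (Set.Icc 1 U) := by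
    apply hF.comp hTcont
    intro N hN
    rw [Set.uIcc_of_le hM1]
    exact ⟨(hTb N hN).1, (hTb N hN).2⟩
  have hinner_nonneg : ∀ N ∈ Set.Icc (1:ℝ) U, 0 ≤ innerF N := by
    intro N hN
    apply intervalIntegral.integral_nonneg (hTb N hN).1
    intro k hk
    exact ads7g_nonneg (by linarith [hk.1])
  have hIntU : IntervalIntegrable innerF MeasureTheory.volume 1 U := by
    apply ContinuousOn.intervalIntegrable
    rwa [Set.uIcc_of_le hU1]
  set m : ℝ := B ^ (-(2:ℝ)) * Real.exp (ads7C * Real.sqrt (B - 1)) with hmdef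
  have hpt : ∀ N ∈ Set.Icc (1:ℝ) (1+μ), m ≤ innerF N := by
    intro N hN
    obtain ⟨hN1, hN2⟩ := hN
    have hNU : N ≤ U := by linarith
    have hT1 : 1 ≤ M * N ^ (-(3:ℝ)/2) := (hTb N ⟨hN1, hNU⟩).1
    have hBT : B ≤ M * N ^ (-(3:ℝ)/2) := by
      have h1 : (1+μ) ^ (-(3:ℝ)/2) ≤ N ^ (-(3:ℝ)/2) :=
        Real.rpow_le_rpow_of_nonpos (by linarith) hN2 (by norm_num)
      calc B = M * (1+μ) ^ (-(3:ℝ)/2) := rfl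
        _ ≤ M * N ^ (-(3:ℝ)/2) := mul_le_mul_of_nonneg_left h1 (by linarith)
    have hstep1 : (∫ k in (B-1)..B, ads7g k) ≤ innerF N := by
      apply intervalIntegral.integral_mono_interval (by linarith) (by linarith) hBT
      · apply (ae_restrict_iff' measurableSet_Ioc).mpr
        apply Filter.Eventually.of_forall
        intro k hk
        exact ads7g_nonneg (by linarith [hk.1])
      · exact ads7g_intInt le_rfl hT1
    have hstep2 : m ≤ ∫ k in (B-1)..B, ads7g k := by
      have hmono : ∀ k ∈ Set.Icc (B-1) B, m ≤ ads7g k := by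
        intro k hk
        obtain ⟨hk1, hk2⟩ := hk
        have hk0 : (0:ℝ) < k := by linarith
        rw [ads7g_eq, hmdef]
        have h1 : B ^ (-(2:ℝ)) ≤ k ^ (-(2:ℝ)) :=
          Real.rpow_le_rpow_of_nonpos hk0 hk2 (by norm_num)
        have h2 : Real.exp (ads7C * Real.sqrt (B-1)) ≤
            Real.exp (ads7C * Real.sqrt k) := by
          apply Real.exp_le_exp.mpr
          exact mul_le_mul_of_nonneg_left (Real.sqrt_le_sqrt hk1) ads7C_pos.le
        exact mul_le_mul h1 h2 (Real.exp_pos _).le (by positivity)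
      have := intervalIntegral.integral_mono_on (by linarith : B - 1 ≤ B)
        (intervalIntegrable_const) (ads7g_intInt (by linarith) (by linarith)) hmono
      simpa using le_trans (le_of_eq (by simp)) this
    exact le_trans hstep2 hstep1
  have hstep3 : μ * m ≤ ∫ N in (1:ℝ)..(1+μ), innerF N := by
    have hIntsub : IntervalIntegrable innerF MeasureTheory.volume 1 (1+μ) := by
      apply ContinuousOn.intervalIntegrable
      apply hinnerCont.mono
      rw [Set.uIcc_of_le (by linarith : (1:ℝ) ≤ 1+μ)]
      exact Set.Icc_subset_Icc le_rfl h1μU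
    have := intervalIntegral.integral_mono_on (by linarith : (1:ℝ) ≤ 1+μ)
      (intervalIntegrable_const) hIntsub hpt
    calc μ * m = (1 + μ - 1) • m := by rw [smul_eq_mul]; ring
      _ = ∫ _ in (1:ℝ)..(1+μ), m := (intervalIntegral.integral_const m).symm
      _ ≤ ∫ N in (1:ℝ)..(1+μ), innerF N := this
  have hstep4 : (∫ N in (1:ℝ)..(1+μ), innerF N) ≤ ∫ N in (1:ℝ)..U, innerF N := by
    apply intervalIntegral.integral_mono_interval le_rfl (by linarith) h1μU
    · apply (ae_restrict_iff' measurableSet_Ioc).mpr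
      apply Filter.Eventually.of_forall
      intro N hN
      exact hinner_nonneg N ⟨hN.1.le, hN.2⟩
    · exact hIntU
  calc μ * m ≤ ∫ N in (1:ℝ)..(1+μ), innerF N := hstep3
    _ ≤ ∫ N in (1:ℝ)..U, innerF N := hstep4
    _ = naiveAds7Count μ := (naiveAds7Count_eq μ).symm

/-- The naive count grows like `exp(2π√(2/3) μ^{−5/4})` up to subexponential factors:
`lim_{μ→0⁺} μ^{5/4} log I(μ) = 2π√(2/3)`. -/
theorem naive_ads7_count_log :
    Tendsto (fun μ : ℝ => μ ^ ((5 : ℝ) / 4) * Real.log (naiveAds7Count μ))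
      (nhdsWithin 0 (Set.Ioi 0)) (nhds (2 * π * Real.sqrt (2 / 3))) := by
  have hCeq : (2 : ℝ) * π * Real.sqrt (2 / 3) = ads7C := rfl
  rw [hCeq]
  set lo : ℝ → ℝ := fun μ => 6 * (Real.log μ * μ ^ ((5:ℝ)/4)) +
      μ ^ ((5:ℝ)/4) * (3 * Real.log (1+μ) - ads7C) + ads7C * (1+μ) ^ (-(3:ℝ)/4) with hlodef
  set hi : ℝ → ℝ := fun μ => ads7C - (25/6) * (Real.log μ * μ ^ ((5:ℝ)/4)) with hhidef
  have hlog : Tendsto (fun μ : ℝ => Real.log μ * μ ^ ((5:ℝ)/4)) (𝓝[>] 0) (𝓝 0) :=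
    tendsto_log_mul_rpow_nhdsGT_zero (by norm_num)
  have hpow : Tendsto (fun μ : ℝ => μ ^ ((5:ℝ)/4)) (𝓝[>] 0) (𝓝 0) := by
    have h := (Real.continuousAt_rpow_const 0 ((5:ℝ)/4) (Or.inr (by norm_num))).tendsto
    rw [Real.zero_rpow (by norm_num)] at h
    exact h.mono_left nhdsWithin_le_nhds
  have hone : Tendsto (fun μ : ℝ => 1 + μ) (𝓝[>] 0) (𝓝 1) := by
    have h : Tendsto (fun μ : ℝ => 1 + μ) (𝓝 0) (𝓝 (1 + 0)) :=
      (continuous_const.add continuous_id).tendsto 0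
    rw [add_zero] at h
    exact h.mono_left nhdsWithin_le_nhds
  have hlog1 : Tendsto (fun μ : ℝ => Real.log (1+μ)) (𝓝[>] 0) (𝓝 0) := by
    have h := (Real.continuousAt_log (one_ne_zero)).tendsto.comp hone
    rwa [Real.log_one] at h
  have hpow1 : Tendsto (fun μ : ℝ => (1+μ) ^ (-(3:ℝ)/4)) (𝓝[>] 0) (𝓝 1) := by
    have h := (Real.continuousAt_rpow_const 1 (-(3:ℝ)/4) (Or.inl one_ne_zero)).tendsto.comp hone
    rwa [Real.one_rpow] at h
  have hlo : Tendsto lo (𝓝[>] 0) (𝓝 ads7C) := by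
    have h := ((hlog.const_mul 6).add
        (hpow.mul ((hlog1.const_mul 3).sub (tendsto_const_nhds (x := ads7C))))).add
        (hpow1.const_mul ads7C)
    have heq : (6 : ℝ) * 0 + 0 * (3 * 0 - ads7C) + ads7C * 1 = ads7C := by ring
    rwa [heq] at h
  have hhi : Tendsto hi (𝓝[>] 0) (𝓝 ads7C) := by
    have h := (tendsto_const_nhds (α := ℝ) (x := ads7C)).sub (hlog.const_mul (25/6))
    have heq : ads7C - 25/6 * 0 = ads7C := by ring
    rwa [heq] at h
  apply tendsto_of_tendsto_of_tendsto_of_le_of_le' hlo hhi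
  · -- lower bound eventually
    filter_upwards [Ioo_mem_nhdsGT (by norm_num : (0:ℝ) < 1/16)] with μ hμ
    obtain ⟨hμ0, hμ16⟩ := hμ
    have hμ1 : μ < 1 := by linarith
    set B : ℝ := μ ^ (-(5:ℝ)/2) * (1+μ) ^ (-(3:ℝ)/2) with hBdef
    have hB0 : 0 < B := by
      have h1 : (0:ℝ) < μ ^ (-(5:ℝ)/2) := Real.rpow_pos_of_pos hμ0 _
      have h2 : (0:ℝ) < (1+μ) ^ (-(3:ℝ)/2) := Real.rpow_pos_of_pos (by linarith) _
      positivity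
    have hB2 : 2 ≤ B := by
      have hM1024 : (1024:ℝ) ≤ μ ^ (-(5:ℝ)/2) := by
        have h1 : ((1:ℝ)/16) ^ (-(5:ℝ)/2) ≤ μ ^ (-(5:ℝ)/2) :=
          Real.rpow_le_rpow_of_nonpos hμ0 hμ16.le (by norm_num)
        rw [ads7_sixteen_pow] at h1
        exact h1
      have hq : (1:ℝ)/4 ≤ (1+μ) ^ (-(3:ℝ)/2) := by
        have h3 : (1+μ) ^ ((3:ℝ)/2) ≤ 4 := by
          calc (1+μ) ^ ((3:ℝ)/2) ≤ (2:ℝ) ^ ((3:ℝ)/2) :=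
                Real.rpow_le_rpow (by linarith) (by linarith) (by norm_num)
            _ ≤ (2:ℝ) ^ (2:ℝ) :=
                Real.rpow_le_rpow_of_exponent_le one_le_two (by norm_num)
            _ = 4 := by rw [Real.rpow_two]; norm_num
        have hp : (0:ℝ) < (1+μ) ^ ((3:ℝ)/2) := Real.rpow_pos_of_pos (by linarith) _
        rw [show (-(3:ℝ)/2) = -((3:ℝ)/2) by norm_num, Real.rpow_neg (by linarith),
          show (1:ℝ)/4 = 4⁻¹ by norm_num]
        exact inv_anti₀ hp h3
      calc (2:ℝ) ≤ 1024 * (1/4) := by norm_num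
        _ ≤ μ ^ (-(5:ℝ)/2) * (1+μ) ^ (-(3:ℝ)/2) :=
            mul_le_mul hM1024 hq (by norm_num) (by linarith)
    set m : ℝ := B ^ (-(2:ℝ)) * Real.exp (ads7C * Real.sqrt (B - 1)) with hmdef
    have hm0 : 0 < m := by
      have := Real.rpow_pos_of_pos hB0 (-(2:ℝ))
      positivity
    have hlow := naiveAds7Count_lower hμ0 hμ16
    have hlogI : Real.log μ + ((-(2:ℝ)) * Real.log B + ads7C * Real.sqrt (B - 1))
        ≤ Real.log (naiveAds7Count μ) := by
      have h := Real.log_le_log (by positivity) hlow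
      rwa [Real.log_mul (ne_of_gt hμ0) (ne_of_gt hm0), hmdef,
        Real.log_mul (ne_of_gt (Real.rpow_pos_of_pos hB0 _)) (ne_of_gt (Real.exp_pos _)),
        Real.log_rpow hB0, Real.log_exp] at h
    have hsqB : Real.sqrt B - 1 ≤ Real.sqrt (B - 1) := by
      have h1B : 1 ≤ Real.sqrt B := (Real.le_sqrt (by norm_num) hB0.le).mpr (by nlinarith)
      apply (Real.le_sqrt (by linarith) (by linarith)).mpr
      nlinarith [Real.sq_sqrt hB0.le]
    have hlogB : Real.log B = (-(5:ℝ)/2) * Real.log μ + (-(3:ℝ)/2) * Real.log (1+μ) := by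
      rw [hBdef, Real.log_mul (ne_of_gt (Real.rpow_pos_of_pos hμ0 _))
        (ne_of_gt (Real.rpow_pos_of_pos (by linarith) _)),
        Real.log_rpow hμ0, Real.log_rpow (by linarith)]
    have hsqrtB : Real.sqrt B = μ ^ (-(5:ℝ)/4) * (1+μ) ^ (-(3:ℝ)/4) := by
      rw [hBdef, Real.sqrt_mul (Real.rpow_nonneg hμ0.le _),
        ads7_sqrt_rpow_half _ hμ0.le, ads7_sqrt_rpow_half _ (by linarith : (0:ℝ) ≤ 1+μ)]
      norm_num
    have hchain : Real.log μ
        + (-(2:ℝ)) * ((-(5:ℝ)/2) * Real.log μ + (-(3:ℝ)/2) * Real.log (1+μ))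
        + ads7C * (Real.sqrt B - 1) ≤ Real.log (naiveAds7Count μ) := by
      have h2 : ads7C * (Real.sqrt B - 1) ≤ ads7C * Real.sqrt (B - 1) :=
        mul_le_mul_of_nonneg_left hsqB ads7C_pos.le
      rw [← hlogB]
      linarith
    have hmul := mul_le_mul_of_nonneg_left hchain (Real.rpow_nonneg hμ0.le ((5:ℝ)/4))
    have hc : μ ^ ((5:ℝ)/4) * μ ^ (-(5:ℝ)/4) = 1 := by
      rw [← Real.rpow_add hμ0]; norm_num
    have hexpand : μ ^ ((5:ℝ)/4) * (Real.log μ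
        + (-(2:ℝ)) * ((-(5:ℝ)/2) * Real.log μ + (-(3:ℝ)/2) * Real.log (1+μ))
        + ads7C * (Real.sqrt B - 1)) = lo μ := by
      rw [hsqrtB, hlodef]
      simp only []
      linear_combination (ads7C * (1+μ) ^ (-(3:ℝ)/4)) * hc
    rw [hexpand] at hmul
    exact hmul
  · -- upper bound eventually
    filter_upwards [Ioo_mem_nhdsGT (by norm_num : (0:ℝ) < 1/16)] with μ hμ
    obtain ⟨hμ0, hμ16⟩ := hμ
    have hμ1 : μ < 1 := by linarith
    have hB0 : (0:ℝ) < μ ^ (-(5:ℝ)/2) * (1+μ) ^ (-(3:ℝ)/2) := by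
      have h1 : (0:ℝ) < μ ^ (-(5:ℝ)/2) := Real.rpow_pos_of_pos hμ0 _
      have h2 : (0:ℝ) < (1+μ) ^ (-(3:ℝ)/2) := Real.rpow_pos_of_pos (by linarith) _
      positivity
    have hpos : 0 < naiveAds7Count μ := by
      refine lt_of_lt_of_le ?_ (naiveAds7Count_lower hμ0 hμ16)
      have := Real.rpow_pos_of_pos hB0 (-(2:ℝ))
      positivity
    have hup := naiveAds7Count_upper hμ0 hμ1
    have hlogI : Real.log (naiveAds7Count μ) ≤
        ads7C * μ ^ (-(5:ℝ)/4) + (-(5:ℝ)/2) * Real.log μ + (-(5:ℝ)/3) * Real.log μ := by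
      have h := Real.log_le_log hpos hup
      rwa [Real.log_mul (by positivity) (ne_of_gt (Real.rpow_pos_of_pos hμ0 _)),
        Real.log_mul (ne_of_gt (Real.exp_pos _)) (ne_of_gt (Real.rpow_pos_of_pos hμ0 _)),
        Real.log_exp, Real.log_rpow hμ0, Real.log_rpow hμ0] at h
    have hmul := mul_le_mul_of_nonneg_left hlogI (Real.rpow_nonneg hμ0.le ((5:ℝ)/4))
    have hc : μ ^ ((5:ℝ)/4) * μ ^ (-(5:ℝ)/4) = 1 := by
      rw [← Real.rpow_add hμ0]; norm_num
    have hexpand : μ ^ ((5:ℝ)/4) * (ads7C * μ ^ (-(5:ℝ)/4)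
        + (-(5:ℝ)/2) * Real.log μ + (-(5:ℝ)/3) * Real.log μ) = hi μ := by
      rw [hhidef]
      simp only []
      linear_combination ads7C * hc
    rw [hexpand] at hmul
    exact hmul
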